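/- arXiv:1708.05472 — 4 statements merged into one kernel-verified Lean document; each statement's English description precedes it below -/
import Mathlib

section
/- Fix an integer k ≥ 2, let c = 2 + (k−2)·4^{1/3} (with 4^{1/3} the real cube root of 4), and define t* ∈ ℝ^k by t*_1 = t*_k = 1/c and t*_i = 4^{1/3}/c for all 1 < i < k. Then t*_i > 0 for all i, Σ_{i=1}^k t*_i = 1, and for every t ∈ ℝ^k with t_i > 0 for all i and Σ_{i=1}^k t_i = 1 one has g(t) ≥ g(t*), where g(t) = π²(1/(4t_1²) + 1/t_2² + 1/t_3² + ⋯ + 1/t_{k−1}² + 1/(4t_k²)), with equality if and only if t = t*. In particular, for k ≥ 3 the ratio of an interior to a boundary component length is t*_2/t*_1 = 4^{1/3}, independent of k. -/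
open Finset

/-- tangent line trick for `a/t^2` -/
lemma zaremba_key (a s t L : ℝ) (ha : 0 < a) (hs : 0 < s) (ht : 0 < t)
    (hL : L = 2 * a / s ^ 3) :
    0 ≤ a / t ^ 2 - a / s ^ 2 + L * (t - s) ∧
      (a / t ^ 2 - a / s ^ 2 + L * (t - s) = 0 ↔ t = s) := by
  have hs' : s ≠ 0 := ne_of_gt hs
  have ht' : t ≠ 0 := ne_of_gt ht
  have hkey : a / t ^ 2 - a / s ^ 2 + L * (t - s)
      = a * (s - t) ^ 2 * (s + 2 * t) / (t ^ 2 * s ^ 3) := by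
    subst hL; field_simp; ring
  rw [hkey]
  constructor
  · positivity
  · rw [div_eq_zero_iff]
    constructor
    · rintro (h | h)
      · rcases mul_eq_zero.1 h with h | h
        · rcases mul_eq_zero.1 h with h | h
          · exact absurd h (ne_of_gt ha)
          · have := pow_eq_zero_iff (n := 2) (by norm_num) |>.1 h
            linarith [sub_eq_zero.1 this]
        · nlinarith
      · exact absurd h (by positivity)
    · intro h; subst h; left; ring

/-- the unique Zaremba partition of the unit interval into `k ≥ 2`
pieces has boundary pieces of length `1/c` and interior pieces of length
`4^(1/3)/c` where `c = 2 + (k-2)·4^(1/3)`; moreover `t*₂/t*₁ = 4^(1/3)`. -/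
theorem zaremba_interval_partition (k : ℕ) (hk : 2 ≤ k)
    (c : ℝ) (hc : c = 2 + ((k : ℝ) - 2) * (4 : ℝ) ^ ((1 : ℝ) / 3))
    (tstar : Fin k → ℝ)
    (htstar : ∀ i : Fin k, tstar i =
      if i.val = 0 ∨ i.val = k - 1 then 1 / c else (4 : ℝ) ^ ((1 : ℝ) / 3) / c)
    (g : (Fin k → ℝ) → ℝ)
    (hg : ∀ t : Fin k → ℝ, g t = Real.pi ^ 2 *
      ∑ i : Fin k, (if i.val = 0 ∨ i.val = k - 1
        then 1 / (4 * (t i) ^ 2) else 1 / (t i) ^ 2)) :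
    (∀ i, 0 < tstar i) ∧ (∑ i, tstar i = 1) ∧
    (∀ t : Fin k → ℝ, (∀ i, 0 < t i) → (∑ i, t i = 1) →
      (g tstar ≤ g t ∧ (g t = g tstar ↔ t = tstar))) ∧
    (∀ h3 : 3 ≤ k,
      tstar ⟨1, by omega⟩ / tstar ⟨0, by omega⟩ = (4 : ℝ) ^ ((1 : ℝ) / 3)) := by
  set r : ℝ := (4 : ℝ) ^ ((1 : ℝ) / 3) with hr_def
  have hr_pos : 0 < r := Real.rpow_pos_of_pos (by norm_num) _
  have hr3 : r ^ 3 = 4 := by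
    rw [hr_def, ← Real.rpow_natCast ((4:ℝ) ^ ((1:ℝ)/3)) 3,
      ← Real.rpow_mul (by norm_num : (0:ℝ) ≤ 4)]
    norm_num
  have hk2 : (2 : ℝ) ≤ (k : ℝ) := by exact_mod_cast hk
  have hc_pos : 0 < c := by
    rw [hc]; nlinarith
  have hc' : c ≠ 0 := ne_of_gt hc_pos
  -- positivity of tstar
  have htpos : ∀ i, 0 < tstar i := by
    intro i; rw [htstar i]; split_ifs <;> positivity
  -- sum of tstar
  have hfilter : (univ.filter (fun i : Fin k => i.val = 0 ∨ i.val = k - 1))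
      = {(⟨0, by omega⟩ : Fin k), ⟨k - 1, by omega⟩} := by
    ext i
    simp only [mem_filter, mem_univ, true_and, mem_insert, mem_singleton, Fin.ext_iff]
  have hcard1 : (univ.filter (fun i : Fin k => i.val = 0 ∨ i.val = k - 1)).card = 2 := by
    rw [hfilter, card_insert_of_notMem, card_singleton]
    simp only [mem_singleton, Fin.ext_iff]
    omega
  have hcard2 : (univ.filter (fun i : Fin k => ¬(i.val = 0 ∨ i.val = k - 1))).card = k - 2 := by
    have := Finset.card_filter_add_card_filter_not
      (s := (univ : Finset (Fin k))) (p := fun i : Fin k => i.val = 0 ∨ i.val = k - 1)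
    simp only [card_univ, Fintype.card_fin] at this
    omega
  have hsum : ∑ i, tstar i = 1 := by
    have : ∑ i, tstar i
        = ∑ i : Fin k, (if i.val = 0 ∨ i.val = k - 1 then 1 / c else r / c) := by
      exact Finset.sum_congr rfl fun i _ => htstar i
    rw [this, Finset.sum_ite, Finset.sum_const, Finset.sum_const, hcard1, hcard2]
    have hcast : ((k - 2 : ℕ) : ℝ) = (k : ℝ) - 2 := by
      push_cast [Nat.cast_sub hk]; ring
    rw [nsmul_eq_mul, nsmul_eq_mul, hcast]
    field_simp
    push_cast
    linarith
  refine ⟨htpos, hsum, ?_, ?_⟩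
  · -- main minimality statement
    intro t htp hts
    set A : Fin k → ℝ := fun i => if i.val = 0 ∨ i.val = k - 1 then (1/4 : ℝ) else 1 with hA
    have hApos : ∀ i, 0 < A i := by intro i; rw [hA]; dsimp; split_ifs <;> norm_num
    have hL : ∀ i, (c ^ 3 / 2 : ℝ) = 2 * A i / (tstar i) ^ 3 := by
      intro i
      rw [hA, htstar i]; dsimp
      split_ifs with h
      · field_simp
        ring
      · rw [div_pow, hr3]
        field_simp
        ring
    set D : Fin k → ℝ := fun i =>
      A i / (t i) ^ 2 - A i / (tstar i) ^ 2 + (c ^ 3 / 2) * (t i - tstar i) with hD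
    have hDkey : ∀ i, 0 ≤ D i ∧ (D i = 0 ↔ t i = tstar i) := by
      intro i
      exact zaremba_key (A i) (tstar i) (t i) (c ^ 3 / 2) (hApos i) (htpos i) (htp i) (hL i)
    have hgform : ∀ u : Fin k → ℝ, g u = Real.pi ^ 2 * ∑ i, A i / (u i) ^ 2 := by
      intro u
      rw [hg u]
      congr 1
      refine Finset.sum_congr rfl fun i _ => ?_
      rw [hA]; dsimp; split_ifs <;> ring
    have hDsum : ∑ i, D i = (∑ i, A i / (t i) ^ 2) - ∑ i, A i / (tstar i) ^ 2 := by
      rw [hD]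
      rw [Finset.sum_add_distrib, Finset.sum_sub_distrib, ← Finset.mul_sum,
        Finset.sum_sub_distrib, hts, hsum]
      ring
    have hdiff : g t - g tstar = Real.pi ^ 2 * ∑ i, D i := by
      rw [hgform t, hgform tstar, hDsum]; ring
    have hDnonneg : 0 ≤ ∑ i, D i := Finset.sum_nonneg fun i _ => (hDkey i).1
    have hpi2 : 0 < Real.pi ^ 2 := by positivity
    constructor
    · nlinarith [mul_nonneg (le_of_lt hpi2) hDnonneg]
    · constructor
      · intro h
        have hz : Real.pi ^ 2 * ∑ i, D i = 0 := by linarith [hdiff, h]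
        have hsz : ∑ i, D i = 0 := by
          rcases mul_eq_zero.1 hz with h' | h'
          · exact absurd h' (ne_of_gt hpi2)
          · exact h'
        have := (Finset.sum_eq_zero_iff_of_nonneg (fun i _ => (hDkey i).1)).1 hsz
        funext i
        exact ((hDkey i).2).1 (this i (Finset.mem_univ i))
      · intro h; rw [h]
  · -- ratio statement
    intro h3
    rw [htstar, htstar]
    have e1 : ((⟨1, by omega⟩ : Fin k) : ℕ) = 1 := rfl
    have e0 : ((⟨0, by omega⟩ : Fin k) : ℕ) = 0 := rfl
    rw [e1, e0, if_neg (by omega), if_pos (by omega)]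
    field_simp
end

section
/- Let p ≥ 1, let d ≥ 1, and let Ω ⊆ ℝ^d be a Borel set. Let μ and μ_n (n ∈ ℕ) be Borel probability measures on ℝ^d, let f : ℝ^d → ℝ be Borel measurable with ∫ |f|^p dμ < ∞, and let f_n : ℝ^d → ℝ be Borel measurable with ∫ |f_n|^p dμ_n < ∞ for each n. Assume μ(∂Ω) = 0, where ∂Ω is the topological boundary of Ω, and assume that d_{TL^p}((μ_n, f_n), (μ, f)) → 0 as n → ∞. Then d_{TL^p}((μ_n, f_n·χ_Ω), (μ, f·χ_Ω)) → 0 as n → ∞, where χ_Ω is the indicator function of Ω. -/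
open MeasureTheory ENNReal Filter

section Auxiliary

open Set Metric NNReal

private lemma rpow_add_le_two_rpow (p u v : ℝ) (hp : 0 ≤ p) (hu : 0 ≤ u) (hv : 0 ≤ v) :
    (u + v) ^ p ≤ 2 ^ p * (u ^ p + v ^ p) := by
  have h2 : u + v ≤ 2 * max u v := by
    rcases le_total u v with h | h
    · have := le_max_right u v; nlinarith [le_max_left u v]
    · nlinarith [le_max_left u v, le_max_right u v]
  calc (u + v) ^ p ≤ (2 * max u v) ^ p :=
        Real.rpow_le_rpow (by positivity) h2 hp
    _ = 2 ^ p * (max u v) ^ p := Real.mul_rpow (by norm_num) (le_max_of_le_left hu)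
    _ ≤ 2 ^ p * (u ^ p + v ^ p) := by
        have : (max u v) ^ p ≤ u ^ p + v ^ p := by
          rcases max_cases u v with ⟨h, _⟩ | ⟨h, _⟩ <;> rw [h]
          · nlinarith [Real.rpow_nonneg hv p]
          · nlinarith [Real.rpow_nonneg hu p]
        have h2p : (0:ℝ) ≤ 2 ^ p := Real.rpow_nonneg (by norm_num) p
        nlinarith [Real.rpow_nonneg (le_max_of_le_left hu (c := v)) p]

private lemma exists_frontier_dist {E : Type*} [NormedAddCommGroup E] [NormedSpace ℝ E]
    {Ω : Set E} {x y : E} (hx : x ∈ Ω) (hy : y ∉ Ω) :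
    ∃ w ∈ frontier Ω, dist x w ≤ dist x y ∧ dist y w ≤ dist x y := by
  have hseg : ∃ w ∈ segment ℝ x y, w ∈ frontier Ω := by
    by_contra h
    push_neg at h
    have hcover : segment ℝ x y ⊆ interior Ω ∪ interior Ωᶜ := by
      intro w hw
      rcases Classical.em (w ∈ closure Ω) with hc | hc
      · left
        have := h w hw
        rw [frontier, Set.mem_diff] at this
        push_neg at this
        exact this hc
      · right
        rw [interior_compl]
        exact hc
    have hdisj : Disjoint (interior Ω) (interior Ωᶜ) :=
      disjoint_compl_right.mono interior_subset interior_subset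
    rcases (convex_segment x y).isPreconnected.subset_or_subset isOpen_interior
        isOpen_interior hdisj hcover with hsub | hsub
    · exact hy (interior_subset (hsub (right_mem_segment ℝ x y)))
    · exact (interior_subset (hsub (left_mem_segment ℝ x y)) : x ∈ Ωᶜ) hx
  obtain ⟨w, hwseg, hwF⟩ := hseg
  have hkey : dist x w + dist w y = dist x y := dist_add_dist_of_mem_segment hwseg
  refine ⟨w, hwF, ?_, ?_⟩
  · nlinarith [dist_nonneg (x := w) (y := y)]
  · rw [dist_comm y w]; nlinarith [dist_nonneg (x := x) (y := w)]

private lemma ennreal_arith (x : ℝ≥0∞) : x/4 + (x/8 + x/8 + (x/8 + x/8)) ≤ x := by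
  rcases eq_or_ne x ⊤ with rfl | hx
  · simp
  · lift x to ℝ≥0 using hx
    rw [← ENNReal.coe_ofNat, ← ENNReal.coe_ofNat, ← ENNReal.coe_div (by norm_num),
      ← ENNReal.coe_div (by norm_num)]
    norm_cast
    rw [← NNReal.coe_le_coe]
    push_cast
    linarith [x.coe_nonneg]

private lemma ennreal_mul_div_cancel_right {b : ℝ≥0∞} (a : ℝ≥0∞) (h0 : b ≠ 0) (ht : b ≠ ⊤) :
    a * b / b = a := by
  rw [div_eq_mul_inv, mul_assoc, ENNReal.mul_inv_cancel h0 ht, mul_one]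

end Auxiliary

/-- The `TL^p` distance between `(μ, f)` and `(ν, g)`: the infimum over
couplings `π` of `μ` and `ν` of `(∬ d(x,y)^p + ‖f(x) - g(y)‖^p dπ)^{1/p}`. -/
noncomputable def TLpDist {E F : Type*} [MeasurableSpace E] [PseudoMetricSpace E]
    [NormedAddCommGroup F] (p : ℝ)
    (μ ν : Measure E) (f g : E → F) : ℝ≥0∞ :=
  ⨅ π : {π : Measure (E × E) // IsProbabilityMeasure π ∧
      π.map Prod.fst = μ ∧ π.map Prod.snd = ν},
    (∫⁻ z, ENNReal.ofReal (dist z.1 z.2 ^ p + ‖f z.1 - g z.2‖ ^ p)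
      ∂(π : Measure (E × E))) ^ (1 / p)

/-- restriction lemma in `TL^p`: if `μ(∂Ω) = 0` and
`(μₙ, fₙ) → (μ, f)` in `TL^p`, then `(μₙ, fₙ·χ_Ω) → (μ, f·χ_Ω)` in `TL^p`. -/
theorem TLp_restriction (p : ℝ) (hp : 1 ≤ p) (d : ℕ) (hd : 1 ≤ d)
    (Ω : Set (EuclideanSpace ℝ (Fin d))) (hΩ : MeasurableSet Ω)
    (μ : Measure (EuclideanSpace ℝ (Fin d))) (hμ : IsProbabilityMeasure μ)
    (μn : ℕ → Measure (EuclideanSpace ℝ (Fin d)))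
    (hμn : ∀ n, IsProbabilityMeasure (μn n))
    (f : EuclideanSpace ℝ (Fin d) → ℝ) (hf : Measurable f)
    (hfLp : ∫⁻ x, ENNReal.ofReal (|f x| ^ p) ∂μ < ⊤)
    (fn : ℕ → EuclideanSpace ℝ (Fin d) → ℝ) (hfn : ∀ n, Measurable (fn n))
    (hfnLp : ∀ n, ∫⁻ x, ENNReal.ofReal (|fn n x| ^ p) ∂(μn n) < ⊤)
    (hbd : μ (frontier Ω) = 0)
    (hconv : Tendsto (fun n => TLpDist p (μn n) μ (fn n) f) atTop (nhds 0)) :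
    Tendsto (fun n => TLpDist p (μn n) μ (Ω.indicator (fn n)) (Ω.indicator f))
      atTop (nhds 0) := by
  classical
  have hp0 : (0:ℝ) < p := lt_of_lt_of_le one_pos hp
  set g : EuclideanSpace ℝ (Fin d) → ℝ≥0∞ := fun y => ENNReal.ofReal (|f y| ^ p) with hgdef
  have hgm : Measurable g :=
    ENNReal.measurable_ofReal.comp ((Real.continuous_rpow_const hp0.le).measurable.comp hf.abs)
  set C : ℝ≥0∞ := ENNReal.ofReal (2 ^ p) with hCdef
  have hC0 : C ≠ 0 := by
    simp only [hCdef, ne_eq, ENNReal.ofReal_eq_zero, not_le]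
    positivity
  have hCtop : C ≠ ⊤ := ENNReal.ofReal_ne_top
  have hC1 : 1 ≤ C := by
    rw [hCdef, ENNReal.one_le_ofReal]
    exact Real.one_le_rpow one_le_two hp0.le
  rw [ENNReal.tendsto_atTop_zero]
  intro ε hε
  set η : ℝ≥0∞ := ε ^ p with hηdef
  have hη0 : η ≠ 0 := by
    rw [hηdef, ne_eq, ENNReal.rpow_eq_zero_iff]
    push_neg
    exact ⟨fun h => absurd h hε.ne', fun _ => hp0.le⟩
  -- the truncation tail
  set T : ℕ → ℝ≥0∞ := fun m => ∫⁻ y, Set.indicator {y | (m:ℝ≥0∞) < g y} g y ∂μ with hTdef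
  have hTmeas : ∀ m : ℕ, Measurable fun y => Set.indicator {y | (m:ℝ≥0∞) < g y} g y :=
    fun m => hgm.indicator (measurableSet_lt measurable_const hgm)
  have hTtend : Tendsto T atTop (nhds 0) := by
    have h0 : ∀ᵐ y ∂μ,
        Tendsto (fun m : ℕ => Set.indicator {y | (m:ℝ≥0∞) < g y} g y) atTop (nhds 0) := by
      refine Filter.Eventually.of_forall fun y => ?_
      obtain ⟨k, hk⟩ := ENNReal.exists_nat_gt (show g y ≠ ⊤ from ENNReal.ofReal_ne_top)
      refine tendsto_const_nhds.congr' ?_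
      filter_upwards [Filter.eventually_ge_atTop k] with m hm
      have hnot : y ∉ {y | (m:ℝ≥0∞) < g y} := by
        simp only [Set.mem_setOf_eq, not_lt]
        exact le_trans hk.le (by exact_mod_cast hm)
      rw [Set.indicator_of_notMem hnot]
    have := tendsto_lintegral_of_dominated_convergence (μ := μ) (bound := g) hTmeas
      (fun m => Filter.Eventually.of_forall fun y => Set.indicator_le_self _ _ y) hfLp.ne h0
    simpa using this
  obtain ⟨m, hm⟩ : ∃ m : ℕ, T m ≤ η / 8 / C := by
    have hpos : (0:ℝ≥0∞) < η / 8 / C :=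
      ENNReal.div_pos (ENNReal.div_pos hη0 (by norm_num)).ne' hCtop
    obtain ⟨m, hm⟩ := (hTtend.eventually (gt_mem_nhds hpos)).exists
    exact ⟨m, hm.le⟩
  set K : ℝ≥0∞ := C * ((m:ℝ≥0∞) + 1) with hKdef
  have hK0 : K ≠ 0 := mul_ne_zero hC0 (by simp)
  have hKtop : K ≠ ⊤ := ENNReal.mul_ne_top hCtop (by simp)
  -- choice of δ
  have hβpos : (0:ℝ≥0∞) < η / 8 / K :=
    ENNReal.div_pos (ENNReal.div_pos hη0 (by norm_num)).ne' hKtop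
  have hcth : Tendsto (fun r => μ (Metric.cthickening r (frontier Ω))) (nhds 0) (nhds 0) := by
    have h := tendsto_measure_cthickening_of_isClosed (μ := μ) (s := frontier Ω)
      ⟨1, one_pos, measure_ne_top μ _⟩ isClosed_frontier
    rwa [hbd] at h
  have hδev : ∀ᶠ δ in nhdsWithin (0:ℝ) (Set.Ioi 0),
      μ (Metric.cthickening δ (frontier Ω)) < η / 8 / K ∧ δ ∈ Set.Ioi (0:ℝ) :=
    ((hcth.mono_left nhdsWithin_le_nhds).eventually (gt_mem_nhds hβpos)).and
      self_mem_nhdsWithin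
  obtain ⟨δ, hδsmall, hδpos⟩ := hδev.exists
  replace hδpos : (0:ℝ) < δ := hδpos
  set D : ℝ≥0∞ := ENNReal.ofReal (δ ^ p) with hDdef
  have hD0 : D ≠ 0 := by
    simp only [hDdef, ne_eq, ENNReal.ofReal_eq_zero, not_le]
    positivity
  have hDtop : D ≠ ⊤ := ENNReal.ofReal_ne_top
  -- choice of θ
  set θ : ℝ≥0∞ := min (η / 4 / C) (η / 8 / K * D) with hθdef
  have hθ0 : θ ≠ 0 := by
    have h1 : (0:ℝ≥0∞) < η / 4 / C :=
      ENNReal.div_pos (ENNReal.div_pos hη0 (by norm_num)).ne' hCtop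
    have h2 : (0:ℝ≥0∞) < η / 8 / K * D := ENNReal.mul_pos hβpos.ne' hD0
    exact (lt_min h1 h2).ne'
  have hθ'0 : (0:ℝ≥0∞) < θ ^ (1 / p) := by
    rw [pos_iff_ne_zero, ne_eq, ENNReal.rpow_eq_zero_iff]
    push_neg
    exact ⟨fun h => absurd h hθ0, fun _ => by positivity⟩
  have hev := hconv.eventually (gt_mem_nhds hθ'0)
  rw [Filter.eventually_atTop] at hev
  obtain ⟨N, hN⟩ := hev
  refine ⟨N, fun n hn => ?_⟩
  have hlt := hN n hn
  rw [TLpDist, iInf_lt_iff] at hlt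
  obtain ⟨π, hπlt⟩ := hlt
  obtain ⟨hπprob, hπ1, hπ2⟩ := π.2
  rw [TLpDist]
  refine le_trans (iInf_le _ π) ?_
  set π' : Measure (EuclideanSpace ℝ (Fin d) × EuclideanSpace ℝ (Fin d)) :=
    (π : Measure (EuclideanSpace ℝ (Fin d) × EuclideanSpace ℝ (Fin d))) with hπ'def
  set I := ∫⁻ z, ENNReal.ofReal (dist z.1 z.2 ^ p + ‖fn n z.1 - f z.2‖ ^ p)
      ∂π' with hIdef
  have hIθ : I ≤ θ := by
    have h1 : I = (I ^ (1/p)) ^ p := by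
      rw [← ENNReal.rpow_mul, one_div, inv_mul_cancel₀ hp0.ne', ENNReal.rpow_one]
    have h2 : (θ ^ (1/p)) ^ p = θ := by
      rw [← ENNReal.rpow_mul, one_div, inv_mul_cancel₀ hp0.ne', ENNReal.rpow_one]
    calc I = (I ^ (1/p)) ^ p := h1
      _ ≤ (θ ^ (1/p)) ^ p := ENNReal.rpow_le_rpow hπlt.le hp0.le
      _ = θ := h2
  -- it suffices to bound the cost integral by η
  have hsuff : ∀ X : ℝ≥0∞, X ≤ η → X ^ (1/p) ≤ ε := by
    intro X hX
    calc X ^ (1/p) ≤ η ^ (1/p) := ENNReal.rpow_le_rpow hX (by positivity)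
      _ = ε := by
        rw [hηdef, ← ENNReal.rpow_mul, mul_one_div, div_self hp0.ne', ENNReal.rpow_one]
  apply hsuff
  -- the sets
  set mixed : Set (EuclideanSpace ℝ (Fin d) × EuclideanSpace ℝ (Fin d)) :=
    (Ω ×ˢ Ωᶜ) ∪ (Ωᶜ ×ˢ Ω) with hmixeddef
  have hmixedm : MeasurableSet mixed := (hΩ.prod hΩ.compl).union (hΩ.compl.prod hΩ)
  set far : Set (EuclideanSpace ℝ (Fin d) × EuclideanSpace ℝ (Fin d)) :=
    {z | δ ≤ dist z.1 z.2} with hfardef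
  have hfarm : MeasurableSet far := measurableSet_le measurable_const measurable_dist
  set Nδ := Metric.cthickening δ (frontier Ω) with hNdef
  have hNm : MeasurableSet Nδ := Metric.isClosed_cthickening.measurableSet
  have hcostm : Measurable fun z : EuclideanSpace ℝ (Fin d) × EuclideanSpace ℝ (Fin d) =>
      ENNReal.ofReal (dist z.1 z.2 ^ p + ‖fn n z.1 - f z.2‖ ^ p) := by
    apply ENNReal.measurable_ofReal.comp
    apply Measurable.add
    · exact (Real.continuous_rpow_const hp0.le).measurable.comp measurable_dist
    · exact (Real.continuous_rpow_const hp0.le).measurable.comp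
        (((hfn n).comp measurable_fst).sub (hf.comp measurable_snd)).norm
  -- pointwise bound
  have key : ∀ z : EuclideanSpace ℝ (Fin d) × EuclideanSpace ℝ (Fin d),
      ENNReal.ofReal (dist z.1 z.2 ^ p + ‖Ω.indicator (fn n) z.1 - Ω.indicator f z.2‖ ^ p)
        ≤ C * ENNReal.ofReal (dist z.1 z.2 ^ p + ‖fn n z.1 - f z.2‖ ^ p)
          + C * mixed.indicator (fun z => g z.2) z := by
    intro z
    have hd0 : (0:ℝ) ≤ dist z.1 z.2 ^ p := Real.rpow_nonneg dist_nonneg p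
    have habs : ∀ x : ℝ, (0:ℝ) ≤ |x| ^ p := fun x => Real.rpow_nonneg (abs_nonneg x) p
    have h2p : (1:ℝ) ≤ 2 ^ p := Real.one_le_rpow one_le_two hp0.le
    simp only [Real.norm_eq_abs]
    by_cases h1 : z.1 ∈ Ω <;> by_cases h2 : z.2 ∈ Ω
    · -- both in Ω
      rw [Set.indicator_of_mem h1, Set.indicator_of_mem h2]
      exact le_add_right (le_mul_of_one_le_left' hC1)
    · -- z.1 ∈ Ω, z.2 ∉ Ω : mixed
      rw [Set.indicator_of_mem h1, Set.indicator_of_notMem h2]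
      have hzmix : z ∈ mixed := Set.mem_union_left _ (Set.mem_prod.mpr ⟨h1, h2⟩)
      have ha : |fn n z.1 - 0| ^ p
          ≤ 2 ^ p * (|fn n z.1 - f z.2| ^ p + |f z.2| ^ p) := by
        have h3 : |fn n z.1 - 0| ≤ |fn n z.1 - f z.2| + |f z.2| := by
          rw [sub_zero]
          calc |fn n z.1| = |fn n z.1 - f z.2 + f z.2| := by ring_nf
            _ ≤ |fn n z.1 - f z.2| + |f z.2| := abs_add_le _ _
        calc |fn n z.1 - 0| ^ p ≤ (|fn n z.1 - f z.2| + |f z.2|) ^ p :=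
              Real.rpow_le_rpow (abs_nonneg _) h3 hp0.le
          _ ≤ 2 ^ p * (|fn n z.1 - f z.2| ^ p + |f z.2| ^ p) :=
              rpow_add_le_two_rpow p _ _ hp0.le (abs_nonneg _) (abs_nonneg _)
      calc ENNReal.ofReal (dist z.1 z.2 ^ p + |fn n z.1 - 0| ^ p)
          ≤ ENNReal.ofReal
            (2 ^ p * (dist z.1 z.2 ^ p + |fn n z.1 - f z.2| ^ p) + 2 ^ p * (|f z.2| ^ p)) := by
            apply ENNReal.ofReal_le_ofReal
            nlinarith [habs (fn n z.1 - f z.2), habs (f z.2), habs (fn n z.1 - 0)]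
        _ = C * ENNReal.ofReal (dist z.1 z.2 ^ p + |fn n z.1 - f z.2| ^ p)
            + C * ENNReal.ofReal (|f z.2| ^ p) := by
            rw [ENNReal.ofReal_add (by positivity) (by positivity),
              ENNReal.ofReal_mul (by positivity), ENNReal.ofReal_mul (by positivity)]
        _ = C * ENNReal.ofReal (dist z.1 z.2 ^ p + |fn n z.1 - f z.2| ^ p)
            + C * mixed.indicator (fun z => g z.2) z := by
            rw [Set.indicator_of_mem hzmix]
    · -- z.1 ∉ Ω, z.2 ∈ Ω : mixed
      rw [Set.indicator_of_notMem h1, Set.indicator_of_mem h2]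
      have hzmix : z ∈ mixed := Set.mem_union_right _ (Set.mem_prod.mpr ⟨h1, h2⟩)
      calc ENNReal.ofReal (dist z.1 z.2 ^ p + |0 - f z.2| ^ p)
          ≤ ENNReal.ofReal
            (2 ^ p * (dist z.1 z.2 ^ p + |fn n z.1 - f z.2| ^ p) + 2 ^ p * (|f z.2| ^ p)) := by
            apply ENNReal.ofReal_le_ofReal
            have : |(0:ℝ) - f z.2| = |f z.2| := by rw [zero_sub, abs_neg]
            rw [this]
            nlinarith [habs (fn n z.1 - f z.2), habs (f z.2)]
        _ = C * ENNReal.ofReal (dist z.1 z.2 ^ p + |fn n z.1 - f z.2| ^ p)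
            + C * ENNReal.ofReal (|f z.2| ^ p) := by
            rw [ENNReal.ofReal_add (by positivity) (by positivity),
              ENNReal.ofReal_mul (by positivity), ENNReal.ofReal_mul (by positivity)]
        _ = C * ENNReal.ofReal (dist z.1 z.2 ^ p + |fn n z.1 - f z.2| ^ p)
            + C * mixed.indicator (fun z => g z.2) z := by
            rw [Set.indicator_of_mem hzmix]
    · -- both out of Ω
      rw [Set.indicator_of_notMem h1, Set.indicator_of_notMem h2]
      calc ENNReal.ofReal (dist z.1 z.2 ^ p + |(0:ℝ) - 0| ^ p)
          ≤ ENNReal.ofReal (dist z.1 z.2 ^ p + |fn n z.1 - f z.2| ^ p) := by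
            apply ENNReal.ofReal_le_ofReal
            have : |(0:ℝ) - 0| ^ p = 0 := by
              rw [sub_zero, abs_zero, Real.zero_rpow hp0.ne']
            rw [this]
            nlinarith [habs (fn n z.1 - f z.2)]
        _ ≤ _ := le_add_right (le_mul_of_one_le_left' hC1)
  -- integrate the pointwise bound
  have step2 : (∫⁻ z, ENNReal.ofReal
        (dist z.1 z.2 ^ p + ‖Ω.indicator (fn n) z.1 - Ω.indicator f z.2‖ ^ p)
        ∂π')
      ≤ C * I + C * ∫⁻ z in mixed, g z.2 ∂π' := by
    calc (∫⁻ z, ENNReal.ofReal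
          (dist z.1 z.2 ^ p + ‖Ω.indicator (fn n) z.1 - Ω.indicator f z.2‖ ^ p)
          ∂π')
        ≤ ∫⁻ z, (C * ENNReal.ofReal (dist z.1 z.2 ^ p + ‖fn n z.1 - f z.2‖ ^ p)
            + C * mixed.indicator (fun z => g z.2) z) ∂π' := lintegral_mono key
      _ = C * I + C * ∫⁻ z in mixed, g z.2 ∂π' := by
          rw [lintegral_add_left' (hcostm.const_mul C).aemeasurable,
            lintegral_const_mul' C _ hCtop, lintegral_const_mul' C _ hCtop,
            lintegral_indicator hmixedm]
  -- geometric inclusion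
  have hmixsub : mixed ⊆ far ∪ Set.univ ×ˢ Nδ := by
    rintro z (⟨hz1, hz2⟩ | ⟨hz1, hz2⟩)
    · by_cases hzd : δ ≤ dist z.1 z.2
      · exact Or.inl hzd
      · push_neg at hzd
        obtain ⟨w, hwF, _, hyw⟩ := exists_frontier_dist hz1 hz2
        exact Or.inr ⟨Set.mem_univ _, Metric.mem_cthickening_of_dist_le z.2 w δ _ hwF
          (hyw.trans hzd.le)⟩
    · by_cases hzd : δ ≤ dist z.1 z.2
      · exact Or.inl hzd
      · push_neg at hzd
        obtain ⟨w, hwF, hxw, _⟩ := exists_frontier_dist hz2 hz1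
        refine Or.inr ⟨Set.mem_univ _, Metric.mem_cthickening_of_dist_le z.2 w δ _ hwF ?_⟩
        rw [dist_comm z.1 z.2] at hzd
        exact hxw.trans hzd.le
  -- tail identity under the coupling
  have htail : ∫⁻ z, Set.indicator {y | (m:ℝ≥0∞) < g y} g z.2 ∂π' = T m := by
    have h := lintegral_map (μ := π') (hTmeas m) measurable_snd
    rw [hπ2] at h
    exact h.symm
  -- splitting of the integral of g over a set
  have hsplit : ∀ s : Set (EuclideanSpace ℝ (Fin d) × EuclideanSpace ℝ (Fin d)),
      (∫⁻ z in s, g z.2 ∂π') ≤ (m:ℝ≥0∞) * π' s + T m := by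
    intro s
    have hpt : ∀ z : EuclideanSpace ℝ (Fin d) × EuclideanSpace ℝ (Fin d),
        g z.2 ≤ (m:ℝ≥0∞) + Set.indicator {y | (m:ℝ≥0∞) < g y} g z.2 := by
      intro z
      rcases le_or_gt (g z.2) (m:ℝ≥0∞) with h | h
      · exact le_add_right h
      · rw [Set.indicator_of_mem (show z.2 ∈ {y | (m:ℝ≥0∞) < g y} from h)]
        exact le_add_self
    calc (∫⁻ z in s, g z.2 ∂π')
        ≤ ∫⁻ z in s, ((m:ℝ≥0∞) + Set.indicator {y | (m:ℝ≥0∞) < g y} g z.2)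
            ∂π' := lintegral_mono fun z => hpt z
      _ = (m:ℝ≥0∞) * π' s
          + ∫⁻ z in s, Set.indicator {y | (m:ℝ≥0∞) < g y} g z.2 ∂π' := by
          rw [lintegral_add_left measurable_const, setLIntegral_const]
      _ ≤ (m:ℝ≥0∞) * π' s
          + ∫⁻ z, Set.indicator {y | (m:ℝ≥0∞) < g y} g z.2 ∂π' :=
          add_le_add_right (setLIntegral_le_lintegral _ _) _
      _ = (m:ℝ≥0∞) * π' s + T m := by rw [htail]
  -- the Nδ part transfers to μ
  have hNtrans : (∫⁻ z in Set.univ ×ˢ Nδ, g z.2 ∂π') = ∫⁻ y in Nδ, g y ∂μ := by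
    have hind : ∀ z : EuclideanSpace ℝ (Fin d) × EuclideanSpace ℝ (Fin d),
        (Set.univ ×ˢ Nδ).indicator (fun z => g z.2) z = Nδ.indicator g z.2 := by
      intro z
      by_cases hz : z.2 ∈ Nδ
      · rw [Set.indicator_of_mem (Set.mem_prod.mpr ⟨Set.mem_univ _, hz⟩), Set.indicator_of_mem hz]
      · rw [Set.indicator_of_notMem (fun hmem => hz (Set.mem_prod.mp hmem).2), Set.indicator_of_notMem hz]
    calc (∫⁻ z in Set.univ ×ˢ Nδ, g z.2 ∂π')
        = ∫⁻ z, (Set.univ ×ˢ Nδ).indicator (fun z => g z.2) z ∂π' :=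
          (lintegral_indicator (MeasurableSet.univ.prod hNm) _).symm
      _ = ∫⁻ z, Nδ.indicator g z.2 ∂π' := lintegral_congr hind
      _ = ∫⁻ y, Nδ.indicator g y ∂(Measure.map Prod.snd π') :=
          (lintegral_map (hgm.indicator hNm) measurable_snd).symm
      _ = ∫⁻ y, Nδ.indicator g y ∂μ := by rw [hπ2]
      _ = ∫⁻ y in Nδ, g y ∂μ := lintegral_indicator hNm _
  -- the μ-side split
  have hNbound : (∫⁻ y in Nδ, g y ∂μ) ≤ (m:ℝ≥0∞) * μ Nδ + T m := by
    have hpt : ∀ y, g y ≤ (m:ℝ≥0∞) + Set.indicator {y | (m:ℝ≥0∞) < g y} g y := by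
      intro y
      rcases le_or_gt (g y) (m:ℝ≥0∞) with h | h
      · exact le_add_right h
      · rw [Set.indicator_of_mem (show y ∈ {y | (m:ℝ≥0∞) < g y} from h)]
        exact le_add_self
    calc (∫⁻ y in Nδ, g y ∂μ)
        ≤ ∫⁻ y in Nδ, ((m:ℝ≥0∞) + Set.indicator {y | (m:ℝ≥0∞) < g y} g y) ∂μ :=
          lintegral_mono fun y => hpt y
      _ = (m:ℝ≥0∞) * μ Nδ + ∫⁻ y in Nδ, Set.indicator {y | (m:ℝ≥0∞) < g y} g y ∂μ := by
          rw [lintegral_add_left measurable_const, setLIntegral_const]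
      _ ≤ (m:ℝ≥0∞) * μ Nδ + T m :=
          add_le_add_right (setLIntegral_le_lintegral _ _) _
  -- the far set has small measure
  have hfarμ : π' far ≤ η / 8 / K := by
    have h1 : D * π' far ≤ I := by
      calc D * π' far = ∫⁻ _ in far, D ∂π' :=
            (setLIntegral_const _ _).symm
        _ ≤ ∫⁻ z in far, ENNReal.ofReal (dist z.1 z.2 ^ p + ‖fn n z.1 - f z.2‖ ^ p)
              ∂π' := by
            refine setLIntegral_mono hcostm fun z hz => ?_
            apply ENNReal.ofReal_le_ofReal
            have hzp : δ ^ p ≤ dist z.1 z.2 ^ p := Real.rpow_le_rpow hδpos.le hz hp0.le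
            have := Real.rpow_nonneg (norm_nonneg (fn n z.1 - f z.2)) p
            nlinarith
        _ ≤ I := setLIntegral_le_lintegral _ _
    have h2 : π' far ≤ θ / D := by
      rw [ENNReal.le_div_iff_mul_le (Or.inl hD0) (Or.inl hDtop)]
      calc π' far * D = D * π' far := mul_comm _ _
        _ ≤ I := h1
        _ ≤ θ := hIθ
    calc π' far ≤ θ / D := h2
      _ ≤ (η / 8 / K * D) / D := ENNReal.div_le_div_right (min_le_right _ _) _
      _ = η / 8 / K := ennreal_mul_div_cancel_right _ hD0 hDtop
  -- assemble
  calc (∫⁻ z, ENNReal.ofReal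
        (dist z.1 z.2 ^ p + ‖Ω.indicator (fn n) z.1 - Ω.indicator f z.2‖ ^ p)
        ∂π')
      ≤ C * I + C * ∫⁻ z in mixed, g z.2 ∂π' := step2
    _ ≤ C * I + C * (((m:ℝ≥0∞) * π' far + T m)
        + ((m:ℝ≥0∞) * μ Nδ + T m)) := by
        gcongr
        calc (∫⁻ z in mixed, g z.2 ∂π')
            ≤ ∫⁻ z in far ∪ Set.univ ×ˢ Nδ, g z.2 ∂π' :=
              lintegral_mono_set hmixsub
          _ ≤ (∫⁻ z in far, g z.2 ∂π')
              + ∫⁻ z in Set.univ ×ˢ Nδ, g z.2 ∂π' := lintegral_union_le _ _ _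
          _ ≤ ((m:ℝ≥0∞) * π' far + T m) + ((m:ℝ≥0∞) * μ Nδ + T m) := by
              refine add_le_add (hsplit far) ?_
              rw [hNtrans]
              exact hNbound
    _ = C * I + (C * ((m:ℝ≥0∞) * π' far) + C * T m
        + (C * ((m:ℝ≥0∞) * μ Nδ) + C * T m)) := by ring
    _ ≤ η / 4 + (η / 8 + η / 8 + (η / 8 + η / 8)) := by
        have hb1 : C * I ≤ η / 4 := by
          calc C * I ≤ C * (η / 4 / C) :=
                mul_le_mul_right (hIθ.trans (min_le_left _ _)) C
            _ = η / 4 := ENNReal.mul_div_cancel hC0 hCtop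
        have hmK : C * (m:ℝ≥0∞) ≤ K := by
          rw [hKdef]
          exact mul_le_mul_right (le_add_right le_rfl) C
        have hb2 : C * ((m:ℝ≥0∞) * π' far) ≤ η / 8 := by
          calc C * ((m:ℝ≥0∞) * π' far)
              = (C * (m:ℝ≥0∞)) * π' far := by ring
            _ ≤ K * (η / 8 / K) := mul_le_mul' hmK hfarμ
            _ = η / 8 := ENNReal.mul_div_cancel hK0 hKtop
        have hb3 : C * T m ≤ η / 8 := by
          calc C * T m ≤ C * (η / 8 / C) := mul_le_mul_right hm C
            _ = η / 8 := ENNReal.mul_div_cancel hC0 hCtop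
        have hb4 : C * ((m:ℝ≥0∞) * μ Nδ) ≤ η / 8 := by
          calc C * ((m:ℝ≥0∞) * μ Nδ) = (C * (m:ℝ≥0∞)) * μ Nδ := by ring
            _ ≤ K * (η / 8 / K) := mul_le_mul' hmK hδsmall.le
            _ = η / 8 := ENNReal.mul_div_cancel hK0 hKtop
        gcongr
    _ ≤ η := ennreal_arith η
end

section
/- Let d ≥ 1, k ≥ 1, and let V ⊆ ℝ^d be a Borel set. Let μ and μ_n (n ∈ ℕ) be Borel probability measures on ℝ^d, let u : ℝ^d → ℝ^k be Borel measurable with ∫ |u|² dμ < ∞, and let u_n : ℝ^d → ℝ^k be Borel measurable with ∫ |u_n|² dμ_n < ∞ for each n. Assume μ(∂V) = 0, where ∂V is the topological boundary of V, and assume that d_{TL²}((μ_n, u_n), (μ, u)) → 0 as n → ∞. Then d_{TL²}((μ_n, χ_V·u_n), (μ, χ_V·u)) → 0 as n → ∞, where χ_V is the indicator function of V. -/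
open MeasureTheory ENNReal Filter Topology

private lemma rpow_two_eq' (r : ℝ) : r ^ (2:ℝ) = r ^ 2 := by
  rw [show (2:ℝ) = ((2:ℕ):ℝ) by norm_num, Real.rpow_natCast]

private lemma cross_frontier' {E : Type*} [NormedAddCommGroup E] [NormedSpace ℝ E]
    {V : Set E} {x y : E} (hx : x ∈ V) (hy : y ∉ V) :
    ∃ c ∈ frontier V, dist x c ≤ dist x y ∧ dist c y ≤ dist x y := by
  by_contra h
  push_neg at h
  have hseg : ∀ c ∈ segment ℝ x y, c ∉ frontier V := by
    intro c hc hcf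
    have h2 := dist_add_dist_of_mem_segment hc
    have h3 : dist x c ≤ dist x y := by linarith [dist_nonneg (x := c) (y := y)]
    have h4 : dist c y ≤ dist x y := by linarith [dist_nonneg (x := x) (y := c)]
    exact absurd h4 (h c hcf h3).not_ge
  have hxi : x ∈ interior V := by
    by_contra h'
    exact hseg x (left_mem_segment ℝ x y) ⟨subset_closure hx, h'⟩
  have hyc : y ∈ (closure V)ᶜ := by
    intro h'
    exact hseg y (right_mem_segment ℝ x y) ⟨h', fun h'' => hy (interior_subset h'')⟩
  obtain ⟨c, hc, hci, hcc⟩ := (convex_segment x y).isPreconnected (interior V) (closure V)ᶜ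
    isOpen_interior isClosed_closure.isOpen_compl
    (fun c hc => by
      by_cases h' : c ∈ closure V
      · left
        by_contra h''
        exact hseg c hc ⟨h', h''⟩
      · exact Or.inr h')
    ⟨x, left_mem_segment ℝ x y, hxi⟩ ⟨y, right_mem_segment ℝ x y, hyc⟩
  exact hcc (subset_closure (interior_subset hci))

/-- vector-valued restriction lemma in `TL²`: if `μ(∂V) = 0` and
`(μₙ, uₙ) → (μ, u)` in `TL²` for `ℝ^k`-valued functions, then
`(μₙ, χ_V·uₙ) → (μ, χ_V·u)` in `TL²`. -/
theorem TL2_restriction_vector (d k : ℕ) (hd : 1 ≤ d) (hk : 1 ≤ k)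
    (V : Set (EuclideanSpace ℝ (Fin d))) (hV : MeasurableSet V)
    (μ : Measure (EuclideanSpace ℝ (Fin d))) (hμ : IsProbabilityMeasure μ)
    (μn : ℕ → Measure (EuclideanSpace ℝ (Fin d)))
    (hμn : ∀ n, IsProbabilityMeasure (μn n))
    (u : EuclideanSpace ℝ (Fin d) → EuclideanSpace ℝ (Fin k)) (hu : Measurable u)
    (huL2 : ∫⁻ x, ENNReal.ofReal (‖u x‖ ^ (2 : ℝ)) ∂μ < ⊤)
    (un : ℕ → EuclideanSpace ℝ (Fin d) → EuclideanSpace ℝ (Fin k))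
    (hun : ∀ n, Measurable (un n))
    (hunL2 : ∀ n, ∫⁻ x, ENNReal.ofReal (‖un n x‖ ^ (2 : ℝ)) ∂(μn n) < ⊤)
    (hbd : μ (frontier V) = 0)
    (hconv : Tendsto (fun n => TLpDist 2 (μn n) μ (un n) u) atTop (nhds 0)) :
    Tendsto (fun n => TLpDist 2 (μn n) μ (V.indicator (un n)) (V.indicator u))
      atTop (nhds 0) := by
  rw [ENNReal.tendsto_nhds_zero] at hconv ⊢
  intro ε hε
  set e : ℝ≥0∞ := min ε 1 with he
  have he0 : (0:ℝ≥0∞) < e := lt_min hε zero_lt_one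
  have heT : e ≠ ⊤ := ((min_le_right ε 1).trans_lt one_lt_top).ne
  set ε4 : ℝ≥0∞ := e^2 / 4 with hε4
  have hε40 : ε4 ≠ 0 := (ENNReal.div_pos (pow_ne_zero 2 he0.ne') (by norm_num)).ne'
  have hε4T : ε4 ≠ ⊤ := by
    exact (ENNReal.div_lt_top (ENNReal.pow_ne_top heT) (by norm_num)).ne
  -- the finite measure `ν = ‖u‖² dμ`
  set ρ : EuclideanSpace ℝ (Fin d) → ℝ≥0∞ := fun y => ENNReal.ofReal (‖u y‖ ^ (2:ℝ)) with hρ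
  have hρm : Measurable ρ := by
    apply ENNReal.measurable_ofReal.comp
    simp only [rpow_two_eq']
    exact hu.norm.pow_const 2
  set ν : Measure (EuclideanSpace ℝ (Fin d)) := μ.withDensity ρ with hν
  -- Step 1: choose M with tail small
  have hSMmeas : ∀ m : ℕ, MeasurableSet {y : EuclideanSpace ℝ (Fin d) | (m:ℝ) < ‖u y‖} :=
    fun m => measurableSet_lt measurable_const hu.norm
  have htail : Tendsto (fun m : ℕ => ν {y : EuclideanSpace ℝ (Fin d) | (m:ℝ) < ‖u y‖}) atTop (𝓝 0) := by
    have h0 : (⋂ m : ℕ, {y : EuclideanSpace ℝ (Fin d) | (m:ℝ) < ‖u y‖}) = ∅ := by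
      ext y
      simp only [Set.mem_iInter, Set.mem_setOf_eq, Set.mem_empty_iff_false, iff_false, not_forall,
        not_lt]
      obtain ⟨m, hm⟩ := exists_nat_ge (‖u y‖)
      exact ⟨m, hm⟩
    have hanti : Antitone fun m : ℕ => {y : EuclideanSpace ℝ (Fin d) | (m:ℝ) < ‖u y‖} := by
      intro m m' hmm' y hy
      exact lt_of_le_of_lt (by exact_mod_cast hmm' : (m:ℝ) ≤ (m':ℝ)) hy
    have hfin : ∃ m : ℕ, ν {y : EuclideanSpace ℝ (Fin d) | (m:ℝ) < ‖u y‖} ≠ ∞ := by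
      refine ⟨0, ?_⟩
      have : ν {y : EuclideanSpace ℝ (Fin d) | ((0:ℕ):ℝ) < ‖u y‖} ≤ ν Set.univ := measure_mono (Set.subset_univ _)
      have hνfin : ν Set.univ < ⊤ := by
        rw [hν, withDensity_apply _ MeasurableSet.univ, Measure.restrict_univ]
        exact huL2
      exact (this.trans_lt hνfin).ne
    have := tendsto_measure_iInter_atTop (μ := ν)
      (fun m => (hSMmeas m).nullMeasurableSet) hanti hfin
    rw [h0, measure_empty] at this
    exact this
  obtain ⟨M, hM⟩ : ∃ m : ℕ, ν {y : EuclideanSpace ℝ (Fin d) | (m:ℝ) < ‖u y‖} ≤ ε4 / 2 :=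
    (ENNReal.tendsto_nhds_zero.mp htail (ε4/2)
      (ENNReal.div_pos hε40 (by norm_num))).exists
  set SM : Set (EuclideanSpace ℝ (Fin d)) := {y : EuclideanSpace ℝ (Fin d) | (M:ℝ) < ‖u y‖} with hSM
  set cM : ℝ≥0∞ := ENNReal.ofReal (((M:ℝ)+1)^2) with hcM
  have hcM0 : cM ≠ 0 := by
    rw [hcM]
    simp only [ne_eq, ENNReal.ofReal_eq_zero, not_le]
    positivity
  have hcMT : cM ≠ ⊤ := ENNReal.ofReal_ne_top
  -- Step 2: choose δ with thickening of the boundary small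
  have hthick := tendsto_measure_cthickening_of_isClosed (μ := μ) (s := frontier V)
    ⟨1, one_pos, (measure_lt_top μ _).ne⟩ isClosed_frontier
  rw [hbd] at hthick
  have hδev : ∀ᶠ r in 𝓝[>] (0:ℝ),
      μ (Metric.cthickening r (frontier V)) ≤ ε4 / (2 * cM) :=
    ENNReal.tendsto_nhds_zero.mp (hthick.mono_left nhdsWithin_le_nhds) _
      (ENNReal.div_pos hε40 (ENNReal.mul_ne_top (by norm_num) hcMT))
  obtain ⟨δ, hδsm, hδpos⟩ := (hδev.and self_mem_nhdsWithin).exists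
  set Nδ : Set (EuclideanSpace ℝ (Fin d)) := Metric.cthickening δ (frontier V) with hNδ
  have hNδmeas : MeasurableSet Nδ := Metric.isClosed_cthickening.measurableSet
  -- Step 3: the threshold η
  set C : ℝ≥0∞ := 2 + 2 * cM / ENNReal.ofReal (δ^2) with hC
  have hδ2 : ENNReal.ofReal (δ^2) ≠ 0 := by
    simp only [ne_eq, ENNReal.ofReal_eq_zero, not_le]
    positivity
  have hC0 : C ≠ 0 := by
    rw [hC]
    intro h
    rw [add_eq_zero] at h
    exact two_ne_zero h.1
  have hCT : C ≠ ⊤ := by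
    rw [hC]
    exact ENNReal.add_ne_top.mpr ⟨by norm_num,
      (ENNReal.div_lt_top (ENNReal.mul_ne_top (by norm_num) hcMT) hδ2).ne⟩
  set η : ℝ≥0∞ := (2 * ε4) / C with hη
  have hη0 : η ≠ 0 :=
    (ENNReal.div_pos (by simp [hε40]) hCT).ne'
  have hηT : η ≠ ⊤ :=
    (ENNReal.div_lt_top (ENNReal.mul_ne_top (by norm_num) hε4T) hC0).ne
  -- main estimate, for each large n
  filter_upwards [hconv ((η/2) ^ (1/(2:ℝ)))
    (by
      apply ENNReal.rpow_pos (ENNReal.div_pos hη0 (by norm_num)) _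
      exact (ENNReal.div_lt_top hηT (by norm_num)).ne)] with n hn
  -- extract a near-optimal coupling
  have hlt : TLpDist 2 (μn n) μ (un n) u < η ^ (1/(2:ℝ)) :=
    hn.trans_lt (ENNReal.rpow_lt_rpow (ENNReal.half_lt_self hη0 hηT) (by norm_num))
  rw [TLpDist] at hlt
  obtain ⟨π', hπlt⟩ := iInf_lt_iff.mp hlt
  obtain ⟨π, hπp, hπ1, hπ2⟩ := π'
  set costA : ℝ≥0∞ :=
    ∫⁻ z, ENNReal.ofReal (dist z.1 z.2 ^ (2:ℝ) + ‖un n z.1 - u z.2‖ ^ (2:ℝ)) ∂π with hcostA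
  have hπcost : costA < η := by
    have h2 := ENNReal.rpow_lt_rpow hπlt (show (0:ℝ) < 2 by norm_num)
    rwa [← ENNReal.rpow_mul, ← ENNReal.rpow_mul, one_div,
      inv_mul_cancel₀ (two_ne_zero (α := ℝ)), ENNReal.rpow_one, ENNReal.rpow_one] at h2
  -- the integrand pieces
  set A : (EuclideanSpace ℝ (Fin d)) × (EuclideanSpace ℝ (Fin d)) → ℝ≥0∞ :=
    fun z => ENNReal.ofReal (dist z.1 z.2 ^ (2:ℝ) + ‖un n z.1 - u z.2‖ ^ (2:ℝ)) with hA
  have hAmeas : Measurable A := by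
    apply ENNReal.measurable_ofReal.comp
    simp only [rpow_two_eq']
    exact ((measurable_dist).pow_const 2).add
      ((((hun n).comp measurable_fst).sub (hu.comp measurable_snd)).norm.pow_const 2)
  set Sd : Set ((EuclideanSpace ℝ (Fin d)) × (EuclideanSpace ℝ (Fin d))) := {z : (EuclideanSpace ℝ (Fin d)) × (EuclideanSpace ℝ (Fin d)) | δ < dist z.1 z.2} with hSd
  have hSdmeas : MeasurableSet Sd := measurableSet_lt measurable_const measurable_dist
  set G1 : (EuclideanSpace ℝ (Fin d)) × (EuclideanSpace ℝ (Fin d)) → ℝ≥0∞ := fun z => 2 * SM.indicator ρ z.2 with hG1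
  set G2 : (EuclideanSpace ℝ (Fin d)) × (EuclideanSpace ℝ (Fin d)) → ℝ≥0∞ := fun z => Sd.indicator (fun _ => 2 * cM) z with hG2
  set G3 : (EuclideanSpace ℝ (Fin d)) × (EuclideanSpace ℝ (Fin d)) → ℝ≥0∞ := fun z => Nδ.indicator (fun _ => 2 * cM) z.2 with hG3
  have hG1meas : Measurable G1 :=
    (measurable_const.mul ((hρm.indicator (hSMmeas M)).comp measurable_snd))
  have hG2meas : Measurable G2 := measurable_const.indicator hSdmeas
  have hG3meas : Measurable G3 :=
    (measurable_const.indicator hNδmeas).comp measurable_snd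
  -- marginal computation
  have hmarg : ∀ g : EuclideanSpace ℝ (Fin d) → ℝ≥0∞, Measurable g → ∫⁻ z, g z.2 ∂π = ∫⁻ y, g y ∂μ := by
    intro g hg
    rw [← hπ2, lintegral_map hg measurable_snd]
  -- pointwise key inequality
  have hkey : ∀ z : (EuclideanSpace ℝ (Fin d)) × (EuclideanSpace ℝ (Fin d)),
      ENNReal.ofReal (dist z.1 z.2 ^ (2:ℝ) + ‖V.indicator (un n) z.1 - V.indicator u z.2‖ ^ (2:ℝ))
        ≤ 2 * A z + (G1 z + G2 z + G3 z) := by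
    rintro ⟨x, y⟩
    set a := un n x
    set b := u y
    have hA2 : 2 * A (x, y) = ENNReal.ofReal (2 * (dist x y ^ 2 + ‖a - b‖ ^ 2)) := by
      rw [hA]
      simp only [rpow_two_eq']
      rw [ENNReal.ofReal_mul (by norm_num : (0:ℝ) ≤ 2)]
      norm_num
      rfl
    by_cases hx : x ∈ V <;> by_cases hy : y ∈ V
    · -- both in V
      simp only [Set.indicator_of_mem hx, Set.indicator_of_mem hy]
      refine le_trans ?_ (self_le_add_right _ _)
      rw [hA2]
      simp only [rpow_two_eq']
      apply ENNReal.ofReal_le_ofReal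
      nlinarith [sq_nonneg (dist x y), sq_nonneg ‖a - b‖]
    · -- x ∈ V, y ∉ V : mismatch
      simp only [Set.indicator_of_mem hx, Set.indicator_of_notMem hy, sub_zero]
      have hnorm : ‖a‖ ^ 2 ≤ 2 * ‖a - b‖ ^ 2 + 2 * ‖b‖ ^ 2 := by
        have h1 : ‖a‖ ≤ ‖a - b‖ + ‖b‖ := by
          calc ‖a‖ = ‖(a - b) + b‖ := by rw [sub_add_cancel]
          _ ≤ ‖a - b‖ + ‖b‖ := norm_add_le _ _
        nlinarith [norm_nonneg a, norm_nonneg (a-b), norm_nonneg b, sq_nonneg (‖a-b‖ - ‖b‖)]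
      have hmain : ENNReal.ofReal (dist x y ^ (2:ℝ) + ‖a‖ ^ (2:ℝ))
          ≤ 2 * A (x,y) + ENNReal.ofReal (2 * ‖b‖ ^ 2) := by
        rw [hA2, ← ENNReal.ofReal_add (by positivity) (by positivity)]
        simp only [rpow_two_eq']
        apply ENNReal.ofReal_le_ofReal
        nlinarith [sq_nonneg (dist x y)]
      refine hmain.trans (add_le_add_right ?_ _)
      by_cases hb : (M:ℝ) < ‖b‖
      · -- big tail
        refine le_trans ?_ ((self_le_add_right _ _).trans (self_le_add_right _ _))
        rw [hG1]
        simp only [Set.indicator_of_mem (show y ∈ SM from hb)]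
        rw [hρ]
        simp only [rpow_two_eq']
        rw [ENNReal.ofReal_mul (by norm_num : (0:ℝ) ≤ 2)]
        norm_num
        rfl
      · push_neg at hb
        have hbound : ENNReal.ofReal (2 * ‖b‖ ^ 2) ≤ 2 * cM := by
          have h2' : ENNReal.ofReal (2 * ‖b‖ ^ 2) = 2 * ENNReal.ofReal (‖b‖ ^ 2) := by
            rw [ENNReal.ofReal_mul (by norm_num : (0:ℝ) ≤ 2), ENNReal.ofReal_ofNat]
          rw [h2', hcM]
          refine mul_le_mul_right (ENNReal.ofReal_le_ofReal ?_) 2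
          exact pow_le_pow_left₀ (norm_nonneg b) (by linarith) 2
        by_cases hdd : δ < dist x y
        · -- far pair
          refine le_trans ?_ ((self_le_add_left _ _).trans (self_le_add_right _ _))
          rw [hG2]
          simp only [Set.indicator_of_mem (show (x,y) ∈ Sd from hdd)]
          exact hbound
        · -- close pair: y is near the boundary
          push_neg at hdd
          obtain ⟨c, hcf, _, hcy⟩ := cross_frontier' hx hy
          have hyN : y ∈ Nδ := by
            rw [hNδ]
            exact Metric.mem_cthickening_of_dist_le y c δ _ hcf (by
              rw [dist_comm]
              exact hcy.trans hdd)
          refine le_trans ?_ (self_le_add_left _ _)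
          rw [hG3]
          simp only [Set.indicator_of_mem hyN]
          exact hbound
    · -- x ∉ V, y ∈ V : mismatch
      simp only [Set.indicator_of_notMem hx, Set.indicator_of_mem hy, zero_sub, norm_neg]
      have hmain : ENNReal.ofReal (dist x y ^ (2:ℝ) + ‖b‖ ^ (2:ℝ))
          ≤ 2 * A (x,y) + ENNReal.ofReal (2 * ‖b‖ ^ 2) := by
        rw [hA2, ← ENNReal.ofReal_add (by positivity) (by positivity)]
        simp only [rpow_two_eq']
        apply ENNReal.ofReal_le_ofReal
        nlinarith [sq_nonneg (dist x y), sq_nonneg ‖a - b‖, sq_nonneg ‖b‖]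
      refine hmain.trans (add_le_add_right ?_ _)
      by_cases hb : (M:ℝ) < ‖b‖
      · refine le_trans ?_ ((self_le_add_right _ _).trans (self_le_add_right _ _))
        rw [hG1]
        simp only [Set.indicator_of_mem (show y ∈ SM from hb)]
        rw [hρ]
        simp only [rpow_two_eq']
        rw [ENNReal.ofReal_mul (by norm_num : (0:ℝ) ≤ 2)]
        norm_num
        rfl
      · push_neg at hb
        have hbound : ENNReal.ofReal (2 * ‖b‖ ^ 2) ≤ 2 * cM := by
          have h2' : ENNReal.ofReal (2 * ‖b‖ ^ 2) = 2 * ENNReal.ofReal (‖b‖ ^ 2) := by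
            rw [ENNReal.ofReal_mul (by norm_num : (0:ℝ) ≤ 2), ENNReal.ofReal_ofNat]
          rw [h2', hcM]
          refine mul_le_mul_right (ENNReal.ofReal_le_ofReal ?_) 2
          exact pow_le_pow_left₀ (norm_nonneg b) (by linarith) 2
        by_cases hdd : δ < dist x y
        · refine le_trans ?_ ((self_le_add_left _ _).trans (self_le_add_right _ _))
          rw [hG2]
          simp only [Set.indicator_of_mem (show (x,y) ∈ Sd from hdd)]
          exact hbound
        · push_neg at hdd
          obtain ⟨c, hcf, hxc, hcy⟩ := cross_frontier' hy hx
          have hyN : y ∈ Nδ := by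
            rw [hNδ]
            exact Metric.mem_cthickening_of_dist_le y c δ _ hcf (by
              exact hxc.trans (by rwa [dist_comm]))
          refine le_trans ?_ (self_le_add_left _ _)
          rw [hG3]
          simp only [Set.indicator_of_mem hyN]
          exact hbound
    · -- both out of V
      simp only [Set.indicator_of_notMem hx, Set.indicator_of_notMem hy, sub_zero, norm_zero]
      refine le_trans ?_ (self_le_add_right _ _)
      rw [hA2]
      simp only [rpow_two_eq']
      apply ENNReal.ofReal_le_ofReal
      nlinarith [sq_nonneg (dist x y), sq_nonneg ‖a - b‖]
  -- integrate the key inequality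
  have hint : (∫⁻ z, ENNReal.ofReal
        (dist z.1 z.2 ^ (2:ℝ) + ‖V.indicator (un n) z.1 - V.indicator u z.2‖ ^ (2:ℝ)) ∂π)
      ≤ 2 * costA + (2 * ν SM + 2 * cM * π Sd + 2 * cM * μ Nδ) := by
    calc (∫⁻ z, ENNReal.ofReal
        (dist z.1 z.2 ^ (2:ℝ) + ‖V.indicator (un n) z.1 - V.indicator u z.2‖ ^ (2:ℝ)) ∂π)
        ≤ ∫⁻ z, (2 * A z + (G1 z + G2 z + G3 z)) ∂π := lintegral_mono hkey
      _ = 2 * costA + (2 * ν SM + 2 * cM * π Sd + 2 * cM * μ Nδ) := by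
          have e1 : ∫⁻ z, 2 * A z ∂π = 2 * costA := lintegral_const_mul 2 hAmeas
          have e2 : ∫⁻ z, G1 z ∂π = 2 * ν SM := by
            have h2' : ∫⁻ z, G1 z ∂π = 2 * ∫⁻ z, SM.indicator ρ z.2 ∂π :=
              lintegral_const_mul 2 ((hρm.indicator (hSMmeas M)).comp measurable_snd)
            have h2'' := hmarg (SM.indicator ρ) (hρm.indicator (hSMmeas M))
            rw [h2', h2'', lintegral_indicator (hSMmeas M), hν,
              withDensity_apply _ (hSMmeas M)]
          have e3 : ∫⁻ z, G2 z ∂π = 2 * cM * π Sd :=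
            lintegral_indicator_const hSdmeas _
          have e4 : ∫⁻ z, G3 z ∂π = 2 * cM * μ Nδ :=
            (hmarg (Nδ.indicator fun _ => 2 * cM)
              (measurable_const.indicator hNδmeas)).trans
              (lintegral_indicator_const hNδmeas _)
          rw [lintegral_add_left (hAmeas.const_mul 2),
            lintegral_add_left (f := fun z => G1 z + G2 z) (hG1meas.add hG2meas),
            lintegral_add_left hG1meas, e1, e2, e3, e4]
  -- Chebyshev bound for π Sd
  have hcheb : π Sd ≤ costA / ENNReal.ofReal (δ^2) := by
    rw [ENNReal.le_div_iff_mul_le (Or.inl hδ2) (Or.inl ENNReal.ofReal_ne_top)]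
    calc π Sd * ENNReal.ofReal (δ^2) = ENNReal.ofReal (δ^2) * π Sd := mul_comm _ _
      _ = ∫⁻ z, Sd.indicator (fun _ => ENNReal.ofReal (δ^2)) z ∂π :=
          (lintegral_indicator_const hSdmeas _).symm
      _ ≤ costA := by
          apply lintegral_mono
          intro z
          by_cases hz : z ∈ Sd
          · simp only [Set.indicator_of_mem hz, hA]
            apply ENNReal.ofReal_le_ofReal
            simp only [rpow_two_eq']
            have hzd : δ < dist z.1 z.2 := hz
            nlinarith [sq_nonneg ‖un n z.1 - u z.2‖, dist_nonneg (x := z.1) (y := z.2)]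
          · simp [Set.indicator_of_notMem hz]
  -- assemble the bound
  have htotal : (∫⁻ z, ENNReal.ofReal
        (dist z.1 z.2 ^ (2:ℝ) + ‖V.indicator (un n) z.1 - V.indicator u z.2‖ ^ (2:ℝ)) ∂π)
      ≤ e ^ 2 := by
    have h1 : 2 * ν SM ≤ ε4 := by
      calc 2 * ν SM ≤ 2 * (ε4 / 2) := mul_le_mul_right hM 2
        _ = ε4 := ENNReal.mul_div_cancel' (by norm_num) (by norm_num)
    have h3 : 2 * cM * μ Nδ ≤ ε4 := by
      calc 2 * cM * μ Nδ ≤ 2 * cM * (ε4 / (2 * cM)) :=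
            mul_le_mul_right hδsm _
        _ = ε4 := ENNReal.mul_div_cancel (mul_ne_zero (by norm_num) hcM0) (ENNReal.mul_ne_top (by norm_num) hcMT)
    have h2 : 2 * costA + 2 * cM * π Sd ≤ C * costA := by
      calc 2 * costA + 2 * cM * π Sd
          ≤ 2 * costA + 2 * cM * (costA / ENNReal.ofReal (δ^2)) :=
            add_le_add_right (mul_le_mul_right hcheb _) _
        _ = C * costA := by
            rw [hC, add_mul]
            congr 1
            simp only [div_eq_mul_inv]
            ring
    have hCη : C * costA ≤ 2 * ε4 := by
      calc C * costA ≤ C * η := mul_le_mul_right hπcost.le _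
        _ = 2 * ε4 := ENNReal.mul_div_cancel hC0 hCT
    calc (∫⁻ z, ENNReal.ofReal
        (dist z.1 z.2 ^ (2:ℝ) + ‖V.indicator (un n) z.1 - V.indicator u z.2‖ ^ (2:ℝ)) ∂π)
        ≤ 2 * costA + (2 * ν SM + 2 * cM * π Sd + 2 * cM * μ Nδ) := hint
      _ = (2 * costA + 2 * cM * π Sd) + (2 * ν SM + 2 * cM * μ Nδ) := by ring
      _ ≤ 2 * ε4 + (ε4 + ε4) := add_le_add (h2.trans hCη) (add_le_add h1 h3)
      _ = 4 * ε4 := by ring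
      _ = e ^ 2 := ENNReal.mul_div_cancel (by norm_num) (by norm_num)
  -- conclude
  calc TLpDist 2 (μn n) μ (V.indicator (un n)) (V.indicator u)
      ≤ (∫⁻ z, ENNReal.ofReal
        (dist z.1 z.2 ^ (2:ℝ) + ‖V.indicator (un n) z.1 - V.indicator u z.2‖ ^ (2:ℝ)) ∂π)
          ^ (1/(2:ℝ)) := by rw [TLpDist]; exact iInf_le_of_le (⟨π, hπp, hπ1, hπ2⟩ : {π : Measure (EuclideanSpace ℝ (Fin d) × EuclideanSpace ℝ (Fin d)) // IsProbabilityMeasure π ∧ π.map Prod.fst = μn n ∧ π.map Prod.snd = μ}) le_rfl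
    _ ≤ (e ^ 2) ^ (1/(2:ℝ)) := ENNReal.rpow_le_rpow htotal (by norm_num)
    _ = e := by
        rw [← ENNReal.rpow_natCast e 2, ← ENNReal.rpow_mul]
        norm_num
    _ ≤ ε := min_le_left _ _
end

section
/- Let n ≥ 1, k ≥ 1, and let W be a symmetric n × n real matrix with nonnegative entries. Then the infimum, taken over all k-tuples (S_1,…,S_k) of pairwise disjoint subsets of {1,…,n}, of Σ_{ℓ=1}^k λ₁(S_ℓ), equals the infimum, taken over all functions u = (u_1,…,u_k) : {1,…,n} → ℝ^k such that u(i) ∈ Σ_k for every i (i.e., for every i at most one coordinate of u(i) is nonzero) and Σ_{i=1}^n u_ℓ(i)² = 1 for every ℓ ∈ {1,…,k}, of Σ_{ℓ=1}^k E(u_ℓ). Both infima are taken in [0,∞], with the infimum of the empty set equal to ∞. -/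
open Finset

/-- The graph Dirichlet energy `E(u) = ∑_{i,j} W_{ij} (u(i) - u(j))²`. -/
def graphDirichletEnergy {n : ℕ} (W : Matrix (Fin n) (Fin n) ℝ)
    (u : Fin n → ℝ) : ℝ :=
  ∑ i, ∑ j, W i j * (u i - u j) ^ 2

/-- The Dirichlet energy `λ₁(S)` of a subset `S` of vertices: the infimum in
`[0,∞]` of the Dirichlet energies of unit-norm functions supported in `S`
(so `λ₁(∅) = ∞`). -/
noncomputable def graphLambdaOne {n : ℕ} (W : Matrix (Fin n) (Fin n) ℝ)
    (S : Set (Fin n)) : ENNReal :=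
  sInf {e : ENNReal | ∃ u : Fin n → ℝ, (∀ i, i ∉ S → u i = 0) ∧
    (∑ i, (u i) ^ 2 = 1) ∧ e = ENNReal.ofReal (graphDirichletEnergy W u)}

lemma graphDirichletEnergy_nonneg {n : ℕ} (W : Matrix (Fin n) (Fin n) ℝ)
    (hnonneg : ∀ i j, 0 ≤ W i j) (u : Fin n → ℝ) :
    0 ≤ graphDirichletEnergy W u := by
  apply Finset.sum_nonneg; intro i _
  apply Finset.sum_nonneg; intro j _
  exact mul_nonneg (hnonneg i j) (sq_nonneg _)

/-- the discrete Dirichlet `k`-partition problem is equivalent to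
the discrete mapping problem into the singular space
`Σ_k = {x ∈ ℝ^k : ∑_{i ≠ j} x_i² x_j² = 0}`: the two infima in `[0,∞]` agree. -/
theorem graph_dirichlet_partition_eq_mapping (n k : ℕ) (hn : 1 ≤ n) (hk : 1 ≤ k)
    (W : Matrix (Fin n) (Fin n) ℝ) (hsymm : ∀ i j, W i j = W j i)
    (hnonneg : ∀ i j, 0 ≤ W i j) :
    sInf {e : ENNReal | ∃ S : Fin k → Set (Fin n),
        Pairwise (Function.onFun Disjoint S) ∧
        e = ∑ ℓ, graphLambdaOne W (S ℓ)}
    = sInf {e : ENNReal | ∃ u : Fin n → Fin k → ℝ,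
        (∀ i, ∑ ℓ, ∑ m, (if ℓ = m then 0 else (u i ℓ) ^ 2 * (u i m) ^ 2) = 0) ∧
        (∀ ℓ, ∑ i, (u i ℓ) ^ 2 = 1) ∧
        e = ENNReal.ofReal
          (∑ ℓ, graphDirichletEnergy W (fun i => u i ℓ))} := by
  apply le_antisymm
  · apply le_sInf
    rintro e ⟨u, hsing, hnorm, rfl⟩
    have hterm : ∀ i ℓ m, (if ℓ = m then (0:ℝ) else (u i ℓ)^2 * (u i m)^2) = 0 := by
      intro i ℓ m
      have hnn : ∀ a b : Fin k, 0 ≤ (if a = b then (0:ℝ) else (u i a)^2*(u i b)^2) := by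
        intro a b; split
        · exact le_refl _
        · positivity
      have h1 := (Finset.sum_eq_zero_iff_of_nonneg
        (fun a _ => Finset.sum_nonneg fun b _ => hnn a b)).1 (hsing i) ℓ (mem_univ ℓ)
      exact (Finset.sum_eq_zero_iff_of_nonneg (fun b _ => hnn ℓ b)).1 h1 m (mem_univ m)
    set S : Fin k → Set (Fin n) := fun ℓ => {i | u i ℓ ≠ 0} with hS
    have hdisj : Pairwise (Function.onFun Disjoint S) := by
      intro ℓ m hlm
      rw [Function.onFun, Set.disjoint_left]
      intro i hiℓ him
      have h := hterm i ℓ m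
      rw [if_neg hlm] at h
      rcases mul_eq_zero.1 h with h' | h'
      · exact hiℓ (pow_eq_zero_iff (by norm_num) |>.1 h')
      · exact him (pow_eq_zero_iff (by norm_num) |>.1 h')
    calc sInf {e : ENNReal | ∃ S : Fin k → Set (Fin n),
        Pairwise (Function.onFun Disjoint S) ∧ e = ∑ ℓ, graphLambdaOne W (S ℓ)}
        ≤ ∑ ℓ, graphLambdaOne W (S ℓ) := sInf_le ⟨S, hdisj, rfl⟩
      _ ≤ ∑ ℓ, ENNReal.ofReal (graphDirichletEnergy W (fun i => u i ℓ)) := by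
          apply Finset.sum_le_sum
          intro ℓ _
          exact sInf_le ⟨fun i => u i ℓ, fun i hi => not_not.1 (fun h => hi h),
            hnorm ℓ, rfl⟩
      _ = ENNReal.ofReal (∑ ℓ, graphDirichletEnergy W (fun i => u i ℓ)) :=
          (ENNReal.ofReal_sum_of_nonneg fun ℓ _ =>
            graphDirichletEnergy_nonneg W hnonneg _).symm
  · apply le_sInf
    rintro e ⟨S, hdisj, rfl⟩
    by_cases hfin : ∀ ℓ, graphLambdaOne W (S ℓ) ≠ ⊤
    · apply ENNReal.le_of_forall_pos_le_add
      intro ε hε _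
      have hex : ∀ ℓ : Fin k, ∃ v : Fin n → ℝ, (∀ i, i ∉ S ℓ → v i = 0) ∧
          (∑ i, (v i)^2 = 1) ∧
          ENNReal.ofReal (graphDirichletEnergy W v) ≤ graphLambdaOne W (S ℓ) + ε / k := by
        intro ℓ
        have hεk : (0:ENNReal) < ε / k := by
          apply ENNReal.div_pos
          · exact_mod_cast hε.ne'
          · exact ENNReal.natCast_ne_top k
        have hlt : graphLambdaOne W (S ℓ) < graphLambdaOne W (S ℓ) + ε / k :=
          ENNReal.lt_add_right (hfin ℓ) hεk.ne'
        rw [graphLambdaOne, sInf_lt_iff] at hlt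
        obtain ⟨a, ⟨v, h1, h2, rfl⟩, hle⟩ := hlt
        exact ⟨v, h1, h2, hle.le⟩
      choose v hv1 hv2 hv3 using hex
      refine le_trans (sInf_le ⟨fun i ℓ => v ℓ i, ?_, hv2, rfl⟩) ?_
      · intro i
        apply Finset.sum_eq_zero; intro ℓ _
        apply Finset.sum_eq_zero; intro m hm
        split
        · rfl
        · rename_i hne
          by_cases hiℓ : i ∈ S ℓ
          · have him : i ∉ S m := Set.disjoint_left.1 (hdisj hne) hiℓ
            simp [hv1 m i him]
          · simp [hv1 ℓ i hiℓ]
      · rw [ENNReal.ofReal_sum_of_nonneg fun ℓ _ =>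
            graphDirichletEnergy_nonneg W hnonneg _]
        calc ∑ ℓ, ENNReal.ofReal (graphDirichletEnergy W (fun i => v ℓ i))
              ≤ ∑ ℓ : Fin k, (graphLambdaOne W (S ℓ) + ε / k) := by
                apply Finset.sum_le_sum
                intro ℓ _
                convert hv3 ℓ
            _ = (∑ ℓ, graphLambdaOne W (S ℓ)) + k * (ε / k) := by
                rw [Finset.sum_add_distrib, Finset.sum_const, card_univ,
                  Fintype.card_fin, nsmul_eq_mul]
            _ ≤ (∑ ℓ, graphLambdaOne W (S ℓ)) + ε := by
                gcongr
                rw [ENNReal.mul_div_cancel]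
                · exact_mod_cast Nat.pos_of_ne_zero (by omega) |>.ne'
                · exact ENNReal.natCast_ne_top k
    · push_neg at hfin
      obtain ⟨ℓ, hℓ⟩ := hfin
      have : ∑ ℓ, graphLambdaOne W (S ℓ) = ⊤ :=
        ENNReal.sum_eq_top.2 ⟨ℓ, mem_univ ℓ, hℓ⟩
      simp [this]
end
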